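/- Let M ≥ 4 be an even integer and γ > 0. For each k ∈ {1,…,M/2−1} let a_k ∈ ℝ with |a_k| ≤ γ, let c_k ∈ [−1,1], and let u_k ∈ ℝ. Assume (Mean({u_k}_{k=1,…,M/2−1}))² ≤ 1 and Var({u_k}_{k=1,…,M/2−1}) ≤ 4. Define v_0 := 0 and v_k := √M · a_k · u_k · c_k for k ∈ {1,…,M/2−1}. Then Var({v_k}_{k=0,…,M/2−1}) ≤ 5·M·γ². -/

import Mathlib

/-- Sample mean of the family `{f k}_{k ∈ s}`. -/
noncomputable def fMean (s : Finset ℕ) (f : ℕ → ℝ) : ℝ := (∑ k ∈ s, f k) / s.card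

/-- Sample variance of the family `{f k}_{k ∈ s}`. -/
noncomputable def fVar (s : Finset ℕ) (f : ℕ → ℝ) : ℝ :=
  (∑ k ∈ s, (f k - fMean s f) ^ 2) / s.card

lemma sum_sq_sub_mean (t : Finset ℕ) (f : ℕ → ℝ) :
    ∑ k ∈ t, (f k - fMean t f) ^ 2
      = ∑ k ∈ t, f k ^ 2 - t.card * (fMean t f) ^ 2 := by
  by_cases h : t = ∅
  · subst h; simp [fMean]
  have hc : (t.card : ℝ) ≠ 0 := by
    have := Finset.card_ne_zero.mpr (Finset.nonempty_iff_ne_empty.mpr h)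
    exact_mod_cast this
  have hsum : ∑ k ∈ t, f k = t.card * fMean t f := by
    rw [fMean]; field_simp
  have expand : ∀ k ∈ t, (f k - fMean t f) ^ 2
      = f k ^ 2 - 2 * fMean t f * f k + fMean t f ^ 2 := fun k _ => by ring
  rw [Finset.sum_congr rfl expand, Finset.sum_add_distrib, Finset.sum_sub_distrib,
    ← Finset.mul_sum, Finset.sum_const, hsum, nsmul_eq_mul]
  ring

/-- For `k ∈ {1,…,M/2−1}` let `|a k| ≤ γ`, `c k ∈ [−1,1]`, and assume
`(Mean u)² ≤ 1` and `Var u ≤ 4` over `{1,…,M/2−1}`. Then the family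
`v 0 = 0`, `v k = √M · a k · u k · c k` has sample variance at most `5·M·γ²`
over `{0,…,M/2−1}`. -/
theorem var_le_five_M_gamma_sq (M : ℕ) (hM4 : 4 ≤ M) (hMe : Even M)
    (γ : ℝ) (hγ : 0 < γ) (a c u : ℕ → ℝ)
    (ha : ∀ k ∈ Finset.Icc 1 (M / 2 - 1), |a k| ≤ γ)
    (hc : ∀ k ∈ Finset.Icc 1 (M / 2 - 1), c k ∈ Set.Icc (-1 : ℝ) 1)
    (hum : (fMean (Finset.Icc 1 (M / 2 - 1)) u) ^ 2 ≤ 1)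
    (huv : fVar (Finset.Icc 1 (M / 2 - 1)) u ≤ 4)
    (v : ℕ → ℝ) (hv0 : v 0 = 0)
    (hv : ∀ k ∈ Finset.Icc 1 (M / 2 - 1),
      v k = Real.sqrt M * a k * u k * c k) :
    fVar (Finset.range (M / 2)) v ≤ 5 * M * γ ^ 2 := by
  set n := M / 2 with hn
  have hn2 : 2 ≤ n := by omega
  set s := Finset.Icc 1 (n - 1) with hs
  have hcard : s.card = n - 1 := by
    simp [hs, Nat.card_Icc]
  have hcardR : (s.card : ℝ) = (n : ℝ) - 1 := by
    rw [hcard]; push_cast [Nat.cast_sub (by omega : 1 ≤ n)]; ring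
  have hcpos : (0:ℝ) < (s.card : ℝ) := by rw [hcardR]; push_cast; norm_num; exact_mod_cast hn2
  -- sum of u^2 bound
  have husum : ∑ k ∈ s, u k ^ 2 ≤ 5 * s.card := by
    have h1 : ∑ k ∈ s, (u k - fMean s u) ^ 2 = s.card * fVar s u := by
      rw [fVar]; field_simp
    have h2 := sum_sq_sub_mean s u
    have : ∑ k ∈ s, u k ^ 2 = s.card * fVar s u + s.card * (fMean s u) ^ 2 := by
      rw [← h1]; linarith [h2]
    rw [this]
    nlinarith [hcpos, huv, hum]
  -- pointwise bound on v^2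
  have hvk : ∀ k ∈ s, v k ^ 2 ≤ M * γ ^ 2 * u k ^ 2 := by
    intro k hk
    rw [hv k hk]
    have hM0 : (0:ℝ) ≤ M := by positivity
    have hsq : Real.sqrt M ^ 2 = M := Real.sq_sqrt hM0
    have ha2 : a k ^ 2 ≤ γ ^ 2 := by
      have := ha k hk
      nlinarith [abs_nonneg (a k), sq_abs (a k)]
    have hc2 : c k ^ 2 ≤ 1 := by
      obtain ⟨h1, h2⟩ := hc k hk
      nlinarith
    have heq : (Real.sqrt M * a k * u k * c k) ^ 2
        = Real.sqrt M ^ 2 * (a k ^ 2 * u k ^ 2 * c k ^ 2) := by ring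
    rw [heq, hsq]
    have h1 : a k ^ 2 * u k ^ 2 * c k ^ 2 ≤ a k ^ 2 * u k ^ 2 := by
      nlinarith [sq_nonneg (a k * u k)]
    have h2 : a k ^ 2 * u k ^ 2 ≤ γ ^ 2 * u k ^ 2 :=
      mul_le_mul_of_nonneg_right ha2 (sq_nonneg _)
    calc (M:ℝ) * (a k ^ 2 * u k ^ 2 * c k ^ 2)
        ≤ (M:ℝ) * (γ ^ 2 * u k ^ 2) :=
          mul_le_mul_of_nonneg_left (h1.trans h2) hM0
      _ = M * γ ^ 2 * u k ^ 2 := by ring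
  -- sum over range n
  have hrange : Finset.range n = insert 0 s := by
    ext k; simp only [Finset.mem_range, Finset.mem_insert, hs, Finset.mem_Icc]; omega
  have h0s : 0 ∉ s := by simp [hs]
  have hvsum : ∑ k ∈ Finset.range n, v k ^ 2 ≤ M * γ ^ 2 * (5 * s.card) := by
    rw [hrange, Finset.sum_insert h0s, hv0]
    have : ∑ k ∈ s, v k ^ 2 ≤ ∑ k ∈ s, M * γ ^ 2 * u k ^ 2 :=
      Finset.sum_le_sum hvk
    rw [← Finset.mul_sum] at this
    have hMγ : (0:ℝ) ≤ (M:ℝ) * γ ^ 2 := by positivity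
    nlinarith [husum]
  -- final
  have hncard : ((Finset.range n).card : ℝ) = n := by simp
  have hnpos : (0:ℝ) < (n:ℝ) := by exact_mod_cast (by omega : 0 < n)
  have hvar : fVar (Finset.range n) v
      ≤ (∑ k ∈ Finset.range n, v k ^ 2) / n := by
    rw [fVar, sum_sq_sub_mean, hncard]
    gcongr
    nlinarith [sq_nonneg (fMean (Finset.range n) v), hnpos]
  have hfinal : M * γ ^ 2 * (5 * (s.card:ℝ)) / n ≤ 5 * M * γ ^ 2 := by
    rw [div_le_iff₀ hnpos, hcardR]
    have hMγ : (0:ℝ) ≤ (M:ℝ) * γ ^ 2 := by positivity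
    nlinarith
  calc fVar (Finset.range n) v ≤ (∑ k ∈ Finset.range n, v k ^ 2) / n := hvar
    _ ≤ M * γ ^ 2 * (5 * (s.card:ℝ)) / n := by gcongr
    _ ≤ 5 * M * γ ^ 2 := hfinal
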